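/- arXiv:1707.09936 — 3 statements merged into one kernel-verified Lean document; each statement's English description precedes it below -/
import Mathlib

section
/- Let (R, m) and (T, η) be Noetherian local rings such that T/mT is a zero-dimensional Gorenstein ring, and let h: R → T be a finite local ring homomorphism (h(m) ⊆ η) such that T is free as an R-module. Then there exists a T-module isomorphism β: T → T* = Hom_R(T, R) (where T acts on T* by (t·φ)(x) = φ(tx)) such that for every ideal J ⊆ T, β⁻¹((T/J)*) = Ann_T J, where (T/J)* is identified with {f ∈ T* : f(J) = 0}. -/
/-- A local Artinian (i.e. zero-dimensional Noetherian local) ring with one-dimensional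
socle, i.e. a zero-dimensional Gorenstein local ring. -/
def IsZeroDimGorensteinP (A : Type*) [CommRing A] : Prop :=
  IsNoetherianRing A ∧ IsLocalRing A ∧ ringKrullDim A = 0 ∧
    ∃ u : A, u ≠ 0 ∧ ∀ η : Ideal A, η.IsMaximal →
      Submodule.annihilator (η : Submodule A A) = Ideal.span {u}

open IsLocalRing

lemma socle_mem_span_of_ne_zero {A : Type*} [CommRing A] [IsLocalRing A] {u : A}
    (hu : Submodule.annihilator ((maximalIdeal A : Ideal A) : Submodule A A) = Ideal.span {u})
    {N : ℕ} (hN : (maximalIdeal A) ^ N = ⊥)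
    {a : A} (ha : a ≠ 0) : u ∈ Ideal.span {a} := by
  have humem : u ∈ Submodule.annihilator ((maximalIdeal A : Ideal A) : Submodule A A) := by
    rw [hu]; exact Ideal.mem_span_singleton_self u
  have key : ∀ n : ℕ, ∀ x : A, x ≠ 0 → Ideal.span {x} * (maximalIdeal A) ^ n = ⊥ →
      u ∈ Ideal.span {x} := by
    intro n
    induction n with
    | zero =>
      intro x hx h
      exfalso
      apply hx
      have : x ∈ (⊥ : Ideal A) := by
        rw [← h, pow_zero, mul_one]; exact Ideal.mem_span_singleton_self x
      simpa using this
    | succ n ih =>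
      intro x hx h
      by_cases h' : Ideal.span {x} * (maximalIdeal A) ^ n = ⊥
      · exact ih x hx h'
      · obtain ⟨y, hy, hy0⟩ := (Submodule.ne_bot_iff _).mp h'
        have hyann : y ∈ Submodule.annihilator ((maximalIdeal A : Ideal A) : Submodule A A) := by
          rw [Submodule.mem_annihilator]
          intro z hz
          have hmem : y * z ∈ Ideal.span {x} * (maximalIdeal A) ^ (n + 1) := by
            rw [pow_succ, ← mul_assoc]
            exact Ideal.mul_mem_mul hy hz
          rw [h] at hmem
          simpa [smul_eq_mul, mul_comm] using hmem
        rw [hu] at hyann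
        obtain ⟨c, hc⟩ := Ideal.mem_span_singleton'.mp hyann
        have hcu : IsUnit c := by
          by_contra hcu
          have hc' : c ∈ maximalIdeal A := by
            rwa [← IsLocalRing.notMem_maximalIdeal, not_not] at hcu
          apply hy0
          have h0 : u • c = 0 := Submodule.mem_annihilator.mp humem c hc'
          rw [← hc]
          rw [smul_eq_mul] at h0
          rw [mul_comm, h0]
        have hymem : y ∈ Ideal.span {x} := (Ideal.mul_le_inf hy).1
        have hueq : u = (hcu.unit⁻¹ : Aˣ) * y := by
          rw [← hc, ← mul_assoc, IsUnit.val_inv_mul, one_mul]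
        rw [hueq]
        exact Ideal.mul_mem_left _ _ hymem
  apply key N a ha
  rw [hN, Ideal.mul_bot]

lemma theta_bijective {k A : Type*} [Field k] [CommRing A] [Algebra k A]
    [FiniteDimensional k A] {u : A}
    (hsoc : ∀ a : A, a ≠ 0 → u ∈ Ideal.span {a})
    (ψ : A →ₗ[k] k) (hψ : ψ u ≠ 0) :
    Function.Bijective ((LinearMap.mul k A).compr₂ ψ) := by
  have hinj : Function.Injective ((LinearMap.mul k A).compr₂ ψ) := by
    rw [injective_iff_map_eq_zero]
    intro a ha0
    by_contra ha
    obtain ⟨c, hc⟩ := Ideal.mem_span_singleton'.mp (hsoc a ha)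
    apply hψ
    have h0 : ((LinearMap.mul k A).compr₂ ψ) a c = 0 := by rw [ha0]; rfl
    rw [← hc]
    simpa [LinearMap.compr₂_apply, LinearMap.mul_apply', mul_comm] using h0
  exact ⟨hinj,
    (LinearMap.injective_iff_surjective_of_finrank_eq_finrank
      Subspace.dual_finrank_eq.symm).mp hinj⟩

set_option maxHeartbeats 1000000 in
/-- Let `(R, m)` and `(T, η)` be Noetherian local rings with `T/mT`
zero-dimensional Gorenstein, and let `h : R → T` be a finite local homomorphism making `T`
a free `R`-module. Then there is a `T`-module isomorphism `β : T → T* = Hom_R(T, R)`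
(where `T` acts on `T*` by `(t·φ)(x) = φ(tx)`, i.e. `β` is `R`-linear bijective and
`β(t·a)(x) = β(a)(t·x)`), such that for every ideal `J ⊆ T` the preimage under `β` of
`(T/J)* = {f ∈ T* : f(J) = 0}` is `Ann_T J`. -/
theorem exists_dual_isomorphism_of_free_gorenstein
    (R T : Type*) [CommRing R] [CommRing T] [IsLocalRing R] [IsLocalRing T]
    [IsNoetherianRing R] [IsNoetherianRing T]
    [Algebra R T] [Module.Finite R T] [Module.Free R T]
    (hloc : IsLocalHom (algebraMap R T))
    (hgor : IsZeroDimGorensteinP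
      (T ⧸ Ideal.map (algebraMap R T) (IsLocalRing.maximalIdeal R))) :
    ∃ β : T ≃ₗ[R] (T →ₗ[R] R),
      (∀ t a y : T, β (t * a) y = β a (t * y)) ∧
      (∀ J : Ideal T, ∀ a : T,
        ((∀ j ∈ J, β a j = 0) ↔ a ∈ Submodule.annihilator (J : Submodule T T))) := by
  set m : Ideal R := maximalIdeal R with hm
  set I : Ideal T := Ideal.map (algebraMap R T) m with hI
  set A := T ⧸ I with hA
  set π : T →+* A := Ideal.Quotient.mk I with hπ
  set k := ResidueField R with hk
  -- the k-algebra structure on A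
  have hkill : ∀ r ∈ m, π (algebraMap R T r) = 0 := by
    intro r hr
    rw [Ideal.Quotient.eq_zero_iff_mem]
    exact Ideal.mem_map_of_mem _ hr
  letI : Algebra k A :=
    (Ideal.Quotient.lift m ((Ideal.Quotient.mk I).comp (algebraMap R T))
      (fun r hr => hkill r hr)).toAlgebra
  have halgk : ∀ r : R, algebraMap k A (residue R r) = π (algebraMap R T r) := fun r => rfl
  haveI : IsScalarTower R k A := IsScalarTower.of_algebraMap_eq (fun r => rfl)
  have hsmul : ∀ (c : R) (x : T), π (c • x) = residue R c • π x := by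
    intro c x
    rw [Algebra.smul_def, map_mul, Algebra.smul_def, halgk]
  -- basis of T over R
  letI : DecidableEq (Module.Free.ChooseBasisIndex R T) := Classical.decEq _
  set ι := Module.Free.ChooseBasisIndex R T with hι
  set b : Module.Basis ι R T := Module.Free.chooseBasis R T with hb
  -- membership in I via coordinates
  have hcoord : ∀ x : T, x ∈ I ↔ ∀ i, b.repr x i ∈ m := by
    intro x
    have hIr : x ∈ I ↔ x ∈ (m • (⊤ : Submodule R T)) := by
      rw [Ideal.smul_top_eq_map]; rfl
    rw [hIr]
    constructor
    · intro hx
      refine Submodule.smul_induction_on hx ?_ ?_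
      · intro r hr t _ i
        rw [map_smul, Finsupp.smul_apply, smul_eq_mul]
        exact Ideal.mul_mem_right _ _ hr
      · intro y z hy hz i
        rw [map_add, Finsupp.add_apply]
        exact Ideal.add_mem _ (hy i) (hz i)
    · intro hx
      rw [← b.sum_repr x]
      exact Submodule.sum_mem _ (fun i _ =>
        Submodule.smul_mem_smul (hx i) Submodule.mem_top)
  -- the induced basis of A over k
  have hli : LinearIndependent k (fun i : ι => π (b i)) := by
    rw [Fintype.linearIndependent_iff]
    intro g hg j
    obtain ⟨r, hr⟩ := Classical.axiomOfChoice
      (fun i : ι => Ideal.Quotient.mk_surjective (I := m) (g i))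
    have hπsum : π (∑ i, r i • b i) = 0 := by
      rw [map_sum]
      rw [← hg]
      refine Finset.sum_congr rfl (fun i _ => ?_)
      rw [hsmul, show residue R (r i) = g i from hr i]
    rw [Ideal.Quotient.eq_zero_iff_mem] at hπsum
    have := (hcoord _).mp hπsum j
    rw [← hr j]
    have hrepr : b.repr (∑ i, r i • b i) j = r j := by
      simp [Finsupp.single_apply]
    rw [hrepr] at this
    exact (Ideal.Quotient.eq_zero_iff_mem (I := m)).mpr this
  have hsp : ⊤ ≤ Submodule.span k (Set.range (fun i : ι => π (b i))) := by
    rintro y -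
    obtain ⟨x, rfl⟩ := Ideal.Quotient.mk_surjective (I := I) y
    rw [show Ideal.Quotient.mk I x = π x from rfl, ← b.sum_repr x, map_sum]
    refine Submodule.sum_mem _ (fun i _ => ?_)
    rw [hsmul]
    exact Submodule.smul_mem _ _ (Submodule.subset_span ⟨i, rfl⟩)
  set bA : Module.Basis ι k A := Module.Basis.mk hli hsp with hbA
  haveI : FiniteDimensional k A := Module.Finite.of_basis bA
  -- extract Gorenstein data
  obtain ⟨-, hAloc, -, u, hu0, hu⟩ := hgor
  haveI : IsLocalRing A := hAloc
  have hann := hu (maximalIdeal A) (maximalIdeal.isMaximal A)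
  -- A is Artinian, so its maximal ideal is nilpotent
  haveI : IsArtinian k A := inferInstance
  haveI : IsArtinianRing A := isArtinian_of_tower k inferInstance
  obtain ⟨N, hN⟩ : ∃ N, (maximalIdeal A) ^ N = ⊥ := by
    obtain ⟨N, hN⟩ := IsArtinianRing.isNilpotent_jacobson_bot (R := A)
    refine ⟨N, ?_⟩
    rw [← IsLocalRing.jacobson_eq_maximalIdeal (⊥ : Ideal A) bot_ne_top, hN]
    rfl
  have hsoc : ∀ a : A, a ≠ 0 → u ∈ Ideal.span {a} :=
    fun a ha => socle_mem_span_of_ne_zero hann hN ha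
  -- a functional not vanishing on u
  obtain ⟨i₀, hi₀⟩ : ∃ i, bA.repr u i ≠ 0 := by
    by_contra hcon
    push_neg at hcon
    apply hu0
    apply bA.repr.injective
    ext i
    simp [hcon i]
  set ψ : A →ₗ[k] k := bA.coord i₀ with hψdef
  have hψu : ψ u ≠ 0 := hi₀
  set Θ : A →ₗ[k] (A →ₗ[k] k) := (LinearMap.mul k A).compr₂ ψ with hΘ
  have hΘbij : Function.Bijective Θ := theta_bijective hsoc ψ hψu
  -- lift ψ to an R-functional φ on T
  obtain ⟨r, hr⟩ := Classical.axiomOfChoice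
    (fun i : ι => Ideal.Quotient.mk_surjective (I := m) (ψ (π (b i))))
  set φ : T →ₗ[R] R := b.constr R r with hφ
  have hφb : ∀ i, φ (b i) = r i := fun i => b.constr_basis R r i
  have hres : ∀ x : T, residue R (φ x) = ψ (π x) := by
    intro x
    rw [← b.sum_repr x, map_sum, map_sum, map_sum, map_sum]
    refine Finset.sum_congr rfl (fun i _ => ?_)
    rw [map_smul, hφb, smul_eq_mul, map_mul, hsmul, map_smul, smul_eq_mul]
    congr 1
    exact hr i
  -- the candidate map and its matrix
  set β₀ : T →ₗ[R] (T →ₗ[R] R) := (LinearMap.mul R T).compr₂ φ with hβ₀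
  have hβ₀app : ∀ a y : T, β₀ a y = φ (a * y) := fun a y => rfl
  set G : Matrix ι ι R := LinearMap.toMatrix b b.dualBasis β₀ with hG
  have hGmap : G.map (residue R) = LinearMap.toMatrix bA bA.dualBasis Θ := by
    ext i j
    rw [Matrix.map_apply, hG, LinearMap.toMatrix_apply, LinearMap.toMatrix_apply,
      Module.Basis.dualBasis_repr, Module.Basis.dualBasis_repr, hβ₀app, hres, map_mul]
    rw [show Θ (bA j) (bA i) = ψ (bA j * bA i) from rfl, Module.Basis.mk_apply, Module.Basis.mk_apply]
  have hdet : IsUnit G.det := by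
    have h2 : IsUnit (LinearMap.toMatrix bA bA.dualBasis Θ).det := by
      have h3 := LinearEquiv.isUnit_det (LinearEquiv.ofBijective Θ hΘbij) bA bA.dualBasis
      have h4 : ((LinearEquiv.ofBijective Θ hΘbij : A ≃ₗ[k] (A →ₗ[k] k)) :
          A →ₗ[k] (A →ₗ[k] k)) = Θ := rfl
      rwa [h4] at h3
    have h1 : residue R G.det ≠ 0 := by
      rw [RingHom.map_det, RingHom.mapMatrix_apply, hGmap]
      exact h2.ne_zero
    apply IsLocalRing.notMem_maximalIdeal.mp
    intro hmem
    exact h1 ((IsLocalRing.residue_eq_zero_iff _).mpr hmem)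
  have hco : ∀ x : T, (LinearEquiv.ofIsUnitDet hdet) x = β₀ x :=
    fun x => LinearMap.congr_fun (LinearEquiv.coe_ofIsUnitDet hdet) x
  refine ⟨LinearEquiv.ofIsUnitDet hdet, ?_, ?_⟩
  · intro t a y
    rw [hco, hco, hβ₀app, hβ₀app]
    congr 1
    ring
  · intro J a
    have hβa : ∀ y : T, ((LinearEquiv.ofIsUnitDet hdet) a) y = φ (a * y) := by
      intro y
      rw [hco, hβ₀app]
    constructor
    · intro hJ
      rw [Submodule.mem_annihilator]
      intro j hj
      rw [smul_eq_mul]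
      -- every coordinate functional kills a * j
      have hcoords : ∀ i : ι, b.coord i (a * j) = 0 := by
        intro i
        obtain ⟨t, ht⟩ := (LinearEquiv.ofIsUnitDet hdet).surjective (b.coord i)
        have h5 : b.coord i (a * j) = φ (t * (a * j)) := by
          rw [← ht, hco, hβ₀app]
        rw [h5, show t * (a * j) = a * (t * j) by ring, ← hβ₀app, ← hco]
        exact hJ (t * j) (J.mul_mem_left t hj)
      apply b.repr.injective
      ext i
      rw [← b.coord_apply, hcoords i]
      simp
    · intro hann j hj
      have : a * j = 0 := by
        have := Submodule.mem_annihilator.mp hann j hj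
        rwa [smul_eq_mul] at this
      rw [hβa, this, map_zero]
end

section
/- Let h: R → T/J be a finite homomorphism of Noetherian local rings such that (T, η) is a local ring which is free as a module over the local ring (R, m), with T/mT a zero-dimensional Gorenstein ring, and J ⊆ T an ideal; assume the R-module structure of T/J inherited from T coincides with the one induced by h. Then h: R → T/J splits as a map of R-modules (i.e., there exists an R-module homomorphism ρ: T/J → R with ρ(1) = 1) if and only if Ann_T J ⊄ mT. -/
set_option linter.unusedSectionVars false
set_option maxHeartbeats 1000000

lemma aux_nilpotent_maxIdeal (A : Type*) [CommRing A] [IsNoetherianRing A] [IsLocalRing A]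
    (hdim : ringKrullDim A = 0) : IsNilpotent (IsLocalRing.maximalIdeal A) := by
  have hprime : ∀ p : Ideal A, p.IsPrime → p = IsLocalRing.maximalIdeal A := by
    intro p hp
    have hle : p ≤ IsLocalRing.maximalIdeal A := IsLocalRing.le_maximalIdeal hp.ne_top
    rcases hle.lt_or_eq with hlt | he
    · exfalso
      have hmax : (IsLocalRing.maximalIdeal A).IsPrime :=
        (IsLocalRing.maximalIdeal.isMaximal A).isPrime
      let c : LTSeries (PrimeSpectrum A) :=
        RelSeries.fromListIsChain [⟨p, hp⟩, ⟨IsLocalRing.maximalIdeal A, hmax⟩]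
          (by simp) (List.isChain_pair.mpr hlt)
      have := Order.LTSeries.length_le_krullDim c
      rw [show ringKrullDim A = Order.krullDim (PrimeSpectrum A) from rfl] at hdim
      rw [hdim] at this
      simp [c, RelSeries.fromListIsChain] at this
      exact absurd this (by decide)
    · exact he
  have h1 : IsLocalRing.maximalIdeal A ≤ nilradical A := by
    rw [nilradical_eq_sInf]
    refine le_sInf ?_
    intro p hp
    exact (hprime p hp).ge
  have h2 := IsNoetherianRing.isNilpotent_nilradical A
  obtain ⟨n, hn⟩ := h2
  exact ⟨n, le_antisymm (le_trans (Ideal.pow_right_mono h1 n) hn.le) zero_le⟩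


lemma aux_socle (A : Type*) [CommRing A] [IsNoetherianRing A] [IsLocalRing A]
    (hdim : ringKrullDim A = 0) {u : A}
    (hann : Submodule.annihilator ((IsLocalRing.maximalIdeal A : Ideal A) : Submodule A A)
      = Ideal.span {u}) (x : A) (hx : x ≠ 0) : ∃ d : A, d * x = u := by
  classical
  set η := IsLocalRing.maximalIdeal A with hη
  obtain ⟨N, hN⟩ := aux_nilpotent_maxIdeal A hdim
  -- P n : some e ∈ η^n has e * x ≠ 0
  set P : ℕ → Prop := fun n => ∃ e ∈ (η ^ n : Ideal A), e * x ≠ 0 with hP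
  have hP0 : P 0 := ⟨1, by simp, by simpa using hx⟩
  have hPN : ¬ P N := by
    rintro ⟨e, he, hne⟩
    rw [hN] at he
    simp only [Ideal.zero_eq_bot, Ideal.mem_bot] at he
    exact hne (by rw [he, zero_mul])
  have hex : ∃ n, ¬ P n := ⟨N, hPN⟩
  set r := Nat.find hex with hr
  have hrpos : r ≠ 0 := by
    intro h0
    have h := Nat.find_spec hex
    rw [← hr, h0] at h
    exact h hP0
  obtain ⟨e, he, hne⟩ : P (r - 1) := by
    have := Nat.find_min hex (m := r - 1) (by omega)
    simpa using not_not.mp this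
  -- e * x annihilates η
  have hannmem : e * x ∈ Submodule.annihilator ((η : Ideal A) : Submodule A A) := by
    rw [Submodule.mem_annihilator]
    intro z hz
    have hz' : z * e ∈ (η ^ r : Ideal A) := by
      have : η ^ r = η * η ^ (r - 1) := by
        conv_lhs => rw [show r = 1 + (r-1) by omega]
        rw [pow_add, pow_one]
      rw [this]
      exact Ideal.mul_mem_mul hz he
    have hzero : ∀ e' ∈ (η ^ r : Ideal A), e' * x = 0 := by
      intro e' he'
      by_contra hne'
      exact (Nat.find_spec hex) ⟨e', he', hne'⟩
    have := hzero (z * e) hz'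
    rw [smul_eq_mul]
    calc (e * x) * z = (z * e) * x := by ring
    _ = 0 := this
  rw [hann, Ideal.mem_span_singleton'] at hannmem
  obtain ⟨c, hc⟩ := hannmem
  have hcne : c * u ≠ 0 := by rw [hc]; exact hne
  have hcunit : IsUnit c := by
    by_contra hcu
    apply hcne
    have hcη : c ∈ η := (IsLocalRing.mem_maximalIdeal c).mpr hcu
    have huann : u ∈ Submodule.annihilator ((η : Ideal A) : Submodule A A) := by
      rw [hann]; exact Ideal.mem_span_singleton_self u
    have := Submodule.mem_annihilator.mp huann c hcη
    rw [smul_eq_mul] at this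
    calc c * u = u * c := mul_comm _ _
    _ = 0 := this
  refine ⟨(hcunit.unit⁻¹ : Aˣ) * e, ?_⟩
  have : ((hcunit.unit⁻¹ : Aˣ) : A) * c = 1 := IsUnit.val_inv_mul hcunit
  calc ((hcunit.unit⁻¹ : Aˣ) : A) * e * x = ((hcunit.unit⁻¹ : Aˣ) : A) * (c * u) := by
        rw [mul_assoc, hc]
  _ = u := by rw [← mul_assoc, this, one_mul]


section Aux
variable {R T : Type*} [CommRing R] [CommRing T] [IsLocalRing R]
  [Algebra R T] [Module.Finite R T] [Module.Free R T]

local notation "m" => IsLocalRing.maximalIdeal R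
local notation "MT" => Ideal.map (algebraMap R T) (IsLocalRing.maximalIdeal R)

lemma aux_funct_mem (f : T →ₗ[R] R) {x : T} (hx : x ∈ MT) : f x ∈ m := by
  have hx' : x ∈ (IsLocalRing.maximalIdeal R) • (⊤ : Submodule R T) := by
    rw [Ideal.smul_top_eq_map]; exact hx
  refine Submodule.smul_induction_on hx' (fun r hr n _ => ?_) (fun a b ha hb => ?_)
  · rw [map_smul, smul_eq_mul]; exact Ideal.mul_mem_right _ _ hr
  · rw [map_add]; exact add_mem ha hb

lemma aux_exists_coord {x : T} (hx : x ∉ MT) :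
    ∃ f : T →ₗ[R] R, f x = 1 := by
  classical
  let b := Module.Free.chooseBasis R T
  have : ∃ i, b.repr x i ∉ m := by
    by_contra h
    push_neg at h
    apply hx
    have : x ∈ (IsLocalRing.maximalIdeal R) • (⊤ : Submodule R T) := by
      rw [← b.sum_repr x]
      exact Submodule.sum_mem _ fun i _ => Submodule.smul_mem_smul (h i) trivial
    rwa [Ideal.smul_top_eq_map] at this
  obtain ⟨i, hi⟩ := this
  have hu : IsUnit (b.repr x i) := by
    by_contra h
    exact hi ((IsLocalRing.mem_maximalIdeal _).mpr h)
  refine ⟨(hu.unit⁻¹ : Rˣ) • b.coord i, ?_⟩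
  have : b.coord i x = b.repr x i := rfl
  rw [LinearMap.smul_apply, this, Units.smul_def, smul_eq_mul, IsUnit.val_inv_mul]



-- the R-linear quotient map T → T⧸J
noncomputable def qmap (J : Ideal T) : T →ₗ[R] (T ⧸ J) :=
  ((Submodule.Quotient.restrictScalarsEquiv R (J : Submodule T T)).toLinearMap).comp
    (Submodule.mkQ (Submodule.restrictScalars R (J : Submodule T T)))

lemma qmap_apply (J : Ideal T) (x : T) : qmap (R := R) J x = Ideal.Quotient.mk J x := rfl

lemma qmap_one (J : Ideal T) : qmap (R := R) J 1 = 1 := rfl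

lemma aux_split (J : Ideal T) (t : T)
    (ht : t ∈ Submodule.annihilator (J : Submodule T T))
    (htm : t ∉ Ideal.map (algebraMap R T) (IsLocalRing.maximalIdeal R)) :
    ∃ ρ : (T ⧸ J) →ₗ[R] R, ρ 1 = 1 := by
  obtain ⟨f, hf⟩ := aux_exists_coord htm
  set g : T →ₗ[R] R := f.comp (LinearMap.mul R T t) with hg
  have hker : Submodule.restrictScalars R (J : Submodule T T) ≤ LinearMap.ker g := by
    intro j hj
    have : t * j = 0 := by
      have := Submodule.mem_annihilator.mp ht j hj
      rwa [smul_eq_mul] at this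
    simp [hg, LinearMap.mem_ker, LinearMap.mul_apply', this]
  refine ⟨(Submodule.liftQ _ g hker).comp
      (Submodule.Quotient.restrictScalarsEquiv R (J : Submodule T T)).symm.toLinearMap, ?_⟩
  have h1 : (1 : T ⧸ J) = Ideal.Quotient.mk J 1 := rfl
  rw [h1]
  have h2 : (Submodule.Quotient.restrictScalarsEquiv R (J : Submodule T T)).symm
      (Ideal.Quotient.mk J 1) = Submodule.Quotient.mk (1 : T) :=
    Submodule.Quotient.restrictScalarsEquiv_symm_mk R _ 1
  simp only [LinearMap.comp_apply, LinearEquiv.coe_toLinearMap, h2, Submodule.liftQ_apply]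
  simp [hg, LinearMap.mul_apply', hf]



lemma aux_gen (hgor : IsZeroDimGorensteinP (T ⧸ (MT : Ideal T))) :
    ∃ ψ : T →ₗ[R] R, (∀ f : T →ₗ[R] R, ∃ t : T, ∀ s, f s = ψ (t * s)) ∧
      (∀ x : T, (∀ s : T, ψ (x * s) = 0) → x = 0) := by
  classical
  obtain ⟨hNoe, hLoc, hdim, u0, hu0, hann⟩ := hgor
  haveI := hNoe
  haveI := hLoc
  -- set up residue field structures
  have hle : (m : Ideal R) ≤ Ideal.comap (algebraMap R T) (MT : Ideal T) :=
    fun r hr => Ideal.mem_map_of_mem _ hr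
  letI : Algebra (IsLocalRing.ResidueField R) (T ⧸ (MT : Ideal T)) :=
    (Ideal.quotientMap (MT : Ideal T) (algebraMap R T) hle).toAlgebra
  haveI : IsScalarTower R (IsLocalRing.ResidueField R) (T ⧸ (MT : Ideal T)) :=
    IsScalarTower.of_algebraMap_eq fun r => rfl
  haveI : Module.Finite R (T ⧸ (MT : Ideal T)) :=
    Module.Finite.of_surjective ((Ideal.Quotient.mkₐ R (MT : Ideal T)).toLinearMap)
      Ideal.Quotient.mk_surjective
  haveI : Module.Finite (IsLocalRing.ResidueField R) (T ⧸ (MT : Ideal T)) :=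
    Module.Finite.of_restrictScalars_finite R _ _
  have hsurjk : Function.Surjective (algebraMap R (IsLocalRing.ResidueField R)) := by
    exact Ideal.Quotient.mk_surjective
  -- the reduction of an R-linear functional on T to a residue-field-linear functional
  have hker : ∀ f : T →ₗ[R] R, Submodule.restrictScalars R ((MT : Ideal T) : Submodule T T) ≤
      LinearMap.ker ((Algebra.linearMap R (IsLocalRing.ResidueField R)).comp f) := by
    intro f x hx
    have : f x ∈ (m : Ideal R) := aux_funct_mem f hx
    show (Algebra.linearMap R (IsLocalRing.ResidueField R)).comp f x = 0
    exact Ideal.Quotient.eq_zero_iff_mem.mpr this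
  let red : (T →ₗ[R] R) →
      ((T ⧸ (MT : Ideal T)) →ₗ[IsLocalRing.ResidueField R] (IsLocalRing.ResidueField R)) := fun f =>
    LinearMap.extendScalarsOfSurjective hsurjk
      ((Submodule.liftQ _ _ (hker f)).comp
        (Submodule.Quotient.restrictScalarsEquiv R
          ((MT : Ideal T) : Submodule T T)).symm.toLinearMap)
  have hred : ∀ (f : T →ₗ[R] R) (x : T),
      red f (Ideal.Quotient.mk (MT : Ideal T) x) = IsLocalRing.residue R (f x) :=
    fun f x => rfl
  -- pick a lift of the socle generator and a coordinate functional ψ with ψ u = 1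
  obtain ⟨u, hu⟩ := Ideal.Quotient.mk_surjective u0
  have hunotM : u ∉ (MT : Ideal T) := by
    intro h
    exact hu0 (by rw [← hu, Ideal.Quotient.eq_zero_iff_mem]; exact h)
  obtain ⟨ψ, hψu⟩ := aux_exists_coord hunotM
  set lam := red ψ with hlam
  have hlamu : lam u0 ≠ 0 := by
    rw [← hu, hred]
    rw [hψu]
    exact one_ne_zero
  -- the pairing map on the Artinian quotient
  set k := IsLocalRing.ResidueField R with hk
  set Tb := T ⧸ (MT : Ideal T) with hTb
  let beta : Tb →ₗ[k] Module.Dual k Tb :=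
    (LinearMap.llcomp k Tb Tb k lam).comp (LinearMap.mul k Tb)
  have hbeta : ∀ x s : Tb, beta x s = lam (x * s) := fun x s => rfl
  have hbinj : Function.Injective beta := by
    rw [injective_iff_map_eq_zero]
    intro x hx0
    by_contra hxne
    obtain ⟨d, hd⟩ := aux_socle Tb hdim
      (hann _ (IsLocalRing.maximalIdeal.isMaximal Tb)) x hxne
    apply hlamu
    rw [← hd, mul_comm d x, ← hbeta, hx0]
    rfl
  have hbsurj : Function.Surjective beta := by
    have hfr : Module.finrank k Tb = Module.finrank k (Module.Dual k Tb) :=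
      (Subspace.dual_finrank_eq).symm
    exact (LinearMap.injective_iff_surjective_of_finrank_eq_finrank hfr).mp hbinj
  -- approximate generation modulo m
  have C1 : ∀ f : T →ₗ[R] R, ∃ t : T, ∀ s : T, f s - ψ (t * s) ∈ (m : Ideal R) := by
    intro f
    obtain ⟨x, hxb⟩ := hbsurj (red f)
    obtain ⟨t, ht⟩ := Ideal.Quotient.mk_surjective x
    refine ⟨t, fun s => ?_⟩
    have : IsLocalRing.residue R (f s - ψ (t * s)) = 0 := by
      rw [map_sub, ← hred f s, ← hred ψ (t * s)]
      have hmul : Ideal.Quotient.mk (MT : Ideal T) (t * s)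
          = x * Ideal.Quotient.mk (MT : Ideal T) s := by
        rw [map_mul, ht]
      rw [hmul, ← hlam, ← hbeta, ← hxb, sub_self]
    rwa [← Ideal.Quotient.eq_zero_iff_mem]
  -- Nakayama: the pairing map α on T itself is surjective
  let b := Module.Free.chooseBasis R T
  let alpha : T →ₗ[R] Module.Dual R T :=
    (LinearMap.llcomp R T T R ψ).comp (LinearMap.mul R T)
  have halpha : ∀ t s : T, alpha t s = ψ (t * s) := fun t s => rfl
  haveI : Module.Finite R (Module.Dual R T) := Module.Finite.of_basis b.dualBasis
  have htop : (⊤ : Submodule R (Module.Dual R T)) ≤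
      LinearMap.range alpha ⊔ (m : Ideal R) • ⊤ := by
    intro f _
    obtain ⟨t, ht⟩ := C1 f
    have hmem : f - alpha t ∈ ((m : Ideal R) • (⊤ : Submodule R (Module.Dual R T))) := by
      have hexp : f - alpha t = ∑ i, ((f - alpha t) (b i)) • b.dualBasis i := by
        conv_lhs => rw [← (b.dualBasis).sum_repr (f - alpha t)]
        simp [Module.Basis.dualBasis_repr]
      rw [hexp]
      refine Submodule.sum_mem _ fun i _ => Submodule.smul_mem_smul ?_ trivial
      have := ht (b i)
      simpa [halpha] using this
    have hf : f = alpha t + (f - alpha t) := by abel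
    rw [hf]
    exact Submodule.add_mem_sup (LinearMap.mem_range_self alpha t) hmem
  have hFG : (⊤ : Submodule R (Module.Dual R T)).FG := Module.finite_def.mp inferInstance
  have hjac : (m : Ideal R) ≤ Ideal.jacobson ⊥ := by
    rw [IsLocalRing.jacobson_eq_maximalIdeal ⊥ bot_ne_top]
  have hrange : ∀ f : T →ₗ[R] R, ∃ t : T, alpha t = f := by
    intro f
    have : f ∈ LinearMap.range alpha :=
      Submodule.le_of_le_smul_of_le_jacobson_bot hFG hjac htop trivial
    exact this
  -- injectivity of α
  have hainj : Function.Injective alpha := by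
    classical
    let e : Module.Dual R T ≃ₗ[R] T := b.dualBasis.equiv b (Equiv.refl _)
    have hendo : Function.Surjective (e.toLinearMap.comp alpha) := by
      intro y
      obtain ⟨t, ht⟩ := hrange (e.symm y)
      exact ⟨t, by simp [LinearMap.comp_apply, ht]⟩
    have := OrzechProperty.injective_of_surjective_endomorphism
      (e.toLinearMap.comp alpha) hendo
    intro x y hxy
    exact this (by simp [LinearMap.comp_apply, hxy])
  refine ⟨ψ, fun f => ?_, fun x hx => ?_⟩
  · obtain ⟨t, ht⟩ := hrange f
    exact ⟨t, fun s => by rw [← ht]; exact halpha t s⟩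
  · have : alpha x = 0 := by
      ext s
      simpa [halpha] using hx s
    have h0 : alpha x = alpha 0 := by rw [this, map_zero]
    exact hainj h0



end Aux

/-- Let `h : R → T/J` be a finite homomorphism of Noetherian local rings,
where `(T, η)` is local and free as a module over the local ring `(R, m)`, `T/mT` is
zero-dimensional Gorenstein, and `J ⊆ T` is an ideal (the `R`-module structure on `T/J`
being the one inherited from `T`). Then `h` splits as a map of `R`-modules (there is an
`R`-linear `ρ : T/J → R` with `ρ 1 = 1`) if and only if `Ann_T J ⊄ mT`. -/
theorem splits_iff_annihilator_not_le
    (R T : Type*) [CommRing R] [CommRing T] [IsLocalRing R] [IsLocalRing T]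
    [IsNoetherianRing R] [IsNoetherianRing T]
    [Algebra R T] [Module.Finite R T] [Module.Free R T]
    (hloc : IsLocalHom (algebraMap R T))
    (hgor : IsZeroDimGorensteinP
      (T ⧸ Ideal.map (algebraMap R T) (IsLocalRing.maximalIdeal R)))
    (J : Ideal T) :
    (∃ ρ : (T ⧸ J) →ₗ[R] R, ρ 1 = 1) ↔
      ¬ (Submodule.annihilator (J : Submodule T T) ≤
          Ideal.map (algebraMap R T) (IsLocalRing.maximalIdeal R)) := by
  constructor
  · rintro ⟨ρ, hρ⟩
    obtain ⟨ψ, hgen, hinj⟩ := aux_gen hgor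
    set φ : T →ₗ[R] R := ρ.comp (qmap J) with hφ
    have hφ1 : φ 1 = 1 := by rw [hφ, LinearMap.comp_apply, qmap_one, hρ]
    obtain ⟨t₀, ht₀⟩ := hgen φ
    intro hle
    have htann : t₀ ∈ Submodule.annihilator (J : Submodule T T) := by
      rw [Submodule.mem_annihilator]
      intro j hj
      rw [smul_eq_mul]
      apply hinj
      intro s
      rw [mul_assoc, ← ht₀ (j * s)]
      have hq : (qmap (R := R) J) (j * s) = 0 := by
        rw [qmap_apply, Ideal.Quotient.eq_zero_iff_mem]
        exact Ideal.mul_mem_right s J hj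
      rw [hφ, LinearMap.comp_apply, hq, map_zero]
    have hmem : ψ t₀ ∈ IsLocalRing.maximalIdeal R := aux_funct_mem ψ (hle htann)
    have hone : (1 : R) = ψ t₀ := by rw [← hφ1, ht₀ 1, mul_one]
    exact (IsLocalRing.maximalIdeal.isMaximal R).ne_top
      (Ideal.eq_top_iff_one _ |>.mpr (hone ▸ hmem))
  · intro h
    obtain ⟨t, htann, htm⟩ := SetLike.not_le_iff_exists.mp h
    exact aux_split J t htann htm
end

section
/- Let (T, η) be a Gorenstein local ring of dimension d, let x₁, …, x_d be a system of parameters with Q = (x₁, …, x_d), let u ∈ T be a lifting of a socle element of T/Q, and let z ∈ T be a zero divisor. If depth(η, T/(z)) ≥ d − 1, then u·z ∈ Q·(z). -/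
open Finset Pointwise

namespace SP11

variable {T : Type*} [CommRing T] {d : ℕ}

/-- Sign of inserting/removing `i` relative to `s`. -/
def sgn (i : Fin d) (s : Finset (Fin d)) : T := (-1) ^ ((s.filter (fun j => j < i)).card)

lemma sgn_mul_self (i : Fin d) (s : Finset (Fin d)) : (sgn i s : T) * sgn i s = 1 := by
  rw [sgn, ← mul_pow]; norm_num

lemma card_filter_erase (i k : Fin d) {s : Finset (Fin d)} (hi : i ∈ s) :
    ((s.filter (fun j => j < k)).card) =
      (((s.erase i).filter (fun j => j < k)).card) + (if i < k then 1 else 0) := by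
  rw [filter_erase]
  by_cases h : i < k
  · have hi' : i ∈ s.filter (fun j => j < k) := mem_filter.2 ⟨hi, h⟩
    rw [if_pos h, card_erase_of_mem hi']
    have : 0 < (s.filter (fun j => j < k)).card := card_pos.2 ⟨i, hi'⟩
    omega
  · have hni : i ∉ s.filter (fun j => j < k) := fun hmem => h (mem_filter.1 hmem).2
    rw [if_neg h, erase_eq_of_notMem hni, add_zero]

lemma sgn_erase (i k : Fin d) {s : Finset (Fin d)} (hi : i ∈ s) :
    (sgn k (s.erase i) : T) = sgn k s * (if i < k then (-1 : T) else 1) := by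
  unfold sgn
  rw [card_filter_erase i k hi]
  by_cases h : i < k
  · rw [if_pos h, if_pos h, pow_add]; ring
  · rw [if_neg h, if_neg h, add_zero, mul_one]

lemma sgn_insert (j k : Fin d) {s : Finset (Fin d)} (hj : j ∉ s) :
    (sgn k (insert j s) : T) = sgn k s * (if j < k then (-1 : T) else 1) := by
  unfold sgn
  rw [filter_insert]
  by_cases h : j < k
  · rw [if_pos h, if_pos h, card_insert_of_notMem (fun hmem => hj (mem_filter.1 hmem).1),
      pow_succ]
  · rw [if_neg h, if_neg h, mul_one]

lemma sgn_swap {i k : Fin d} {s : Finset (Fin d)} (hi : i ∈ s) (hk : k ∈ s) (hik : i ≠ k) :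
    (sgn i s : T) * sgn k (s.erase i) = -(sgn k s * sgn i (s.erase k)) := by
  rw [sgn_erase i k hi, sgn_erase k i hk]
  rcases lt_or_gt_of_ne hik with h | h
  · rw [if_pos h, if_neg (asymm h)]; ring
  · rw [if_neg (asymm h), if_pos h]; ring

lemma sgn_swap' {i j : Fin d} {s : Finset (Fin d)} (hi : i ∈ s) (hj : j ∉ s) :
    (sgn i s : T) * sgn j (insert j (s.erase i)) =
      -(sgn j (insert j s) * sgn i (insert j s)) := by
  have hij : i ≠ j := fun h => hj (h ▸ hi)
  have hj' : j ∉ s.erase i := fun h => hj (mem_erase.1 h).2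
  have h1 : (sgn j (insert j (s.erase i)) : T) = sgn j (s.erase i) := by
    rw [sgn_insert j j hj']; simp
  have h2 : (sgn j (insert j s) : T) = sgn j s := by
    rw [sgn_insert j j hj]; simp
  rw [h1, h2, sgn_erase i j hi, sgn_insert j i hj]
  rcases lt_or_gt_of_ne hij with h | h
  · rw [if_pos h, if_neg (asymm h)]; ring
  · rw [if_neg (asymm h), if_pos h]; ring


section Differential

variable (x : Fin d → T)

variable (M : Type*) [AddCommGroup M] [Module T M]

/-- The (cochain-style) Koszul differential. -/
def Dmap : (Finset (Fin d) → M) →ₗ[T] (Finset (Fin d) → M) where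
  toFun f := fun s => ∑ i ∈ s, ((sgn i s : T) * x i) • f (s.erase i)
  map_add' f g := by
    funext s
    simp [smul_add, Finset.sum_add_distrib]
  map_smul' c f := by
    funext s
    simp only [RingHom.id_apply, Pi.smul_apply, Finset.smul_sum]
    exact Finset.sum_congr rfl fun i _ => smul_comm _ _ _

variable {M}

lemma Dmap_apply (f : Finset (Fin d) → M) (s : Finset (Fin d)) :
    Dmap x M f s = ∑ i ∈ s, ((sgn i s : T) * x i) • f (s.erase i) := rfl

lemma Dmap_Dmap (f : Finset (Fin d) → M) : Dmap x M (Dmap x M f) = 0 := by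
  funext s
  show (∑ i ∈ s, ((sgn i s : T) * x i) •
      ∑ k ∈ s.erase i, ((sgn k (s.erase i) : T) * x k) • f ((s.erase i).erase k)) = 0
  have step1 : (∑ i ∈ s, ((sgn i s : T) * x i) •
      ∑ k ∈ s.erase i, ((sgn k (s.erase i) : T) * x k) • f ((s.erase i).erase k))
      = ∑ i ∈ s, ∑ k ∈ s.erase i,
          ((((sgn i s : T) * x i) * ((sgn k (s.erase i) : T) * x k)) •
            f ((s.erase i).erase k)) := by
    exact Finset.sum_congr rfl fun i _ => by
      rw [Finset.smul_sum]
      exact Finset.sum_congr rfl fun k _ => (smul_smul _ _ _)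
  rw [step1]
  rw [Finset.sum_sigma' s (fun i => s.erase i)
      (fun i k => (((sgn i s : T) * x i) * ((sgn k (s.erase i) : T) * x k)) •
        f ((s.erase i).erase k))]
  apply Finset.sum_involution (fun p _ => (⟨p.2, p.1⟩ : (_ : Fin d) × Fin d))
  · intro p hp
    rcases Finset.mem_sigma.1 hp with ⟨h1, h2⟩
    have hk : p.2 ∈ s := Finset.mem_of_mem_erase h2
    have hne : p.1 ≠ p.2 := fun h => (Finset.mem_erase.1 h2).1 h.symm
    have hcoef : (((sgn p.1 s : T) * x p.1) * ((sgn p.2 (s.erase p.1) : T) * x p.2))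
        = -((((sgn p.2 s : T) * x p.2) * ((sgn p.1 (s.erase p.2) : T) * x p.1))) := by
      have := sgn_swap (T := T) h1 hk hne
      calc ((sgn p.1 s : T) * x p.1) * ((sgn p.2 (s.erase p.1) : T) * x p.2)
          = ((sgn p.1 s : T) * sgn p.2 (s.erase p.1)) * (x p.1 * x p.2) := by ring
        _ = (-((sgn p.2 s : T) * sgn p.1 (s.erase p.2))) * (x p.1 * x p.2) := by rw [this]
        _ = -((((sgn p.2 s : T) * x p.2) * ((sgn p.1 (s.erase p.2) : T) * x p.1))) := by ring
    have harg : (s.erase p.1).erase p.2 = (s.erase p.2).erase p.1 :=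
      Finset.erase_right_comm
    rw [hcoef, harg, neg_smul, neg_add_cancel]
  · intro p hp _
    rcases Finset.mem_sigma.1 hp with ⟨_, h2⟩
    have hne : p.1 ≠ p.2 := fun h => (Finset.mem_erase.1 h2).1 h.symm
    intro h
    exact hne (congrArg Sigma.fst h).symm
  · intro p hp
    rcases Finset.mem_sigma.1 hp with ⟨h1, h2⟩
    exact Finset.mem_sigma.2 ⟨Finset.mem_of_mem_erase h2,
      Finset.mem_erase.2 ⟨fun h => (Finset.mem_erase.1 h2).1 h.symm |>.elim, h1⟩⟩
  · intro p hp
    rfl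

/-- Koszul contraction. -/
def iot (x : Fin d → T) (j : Fin d) (f : Finset (Fin d) → M) : Finset (Fin d) → M :=
  fun s => if j ∈ s then 0 else (sgn j (insert j s) : T) • f (insert j s)

lemma homotopy (j : Fin d) (f : Finset (Fin d) → M) :
    Dmap x M (iot x j f) + iot x j (Dmap x M f) = x j • f := by
  funext s
  by_cases hj : j ∈ s
  · have h2 : iot x j (Dmap x M f) s = 0 := by simp [iot, hj]
    have h1 : Dmap x M (iot x j f) s = x j • f s := by
      rw [Dmap_apply]
      rw [Finset.sum_eq_single_of_mem j hj]
      · have hjn : j ∉ s.erase j := Finset.notMem_erase j s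
        have : iot x j f (s.erase j) = (sgn j s : T) • f s := by
          simp only [iot, if_neg hjn, Finset.insert_erase hj]
        rw [this, smul_smul]
        have : ((sgn j s : T) * x j) * (sgn j s : T) = x j := by
          have := sgn_mul_self (T := T) j s
          calc ((sgn j s : T) * x j) * (sgn j s : T) = ((sgn j s : T) * sgn j s) * x j := by ring
            _ = x j := by rw [this]; ring
        rw [this]
      · intro i _ hij
        have : j ∈ s.erase i := Finset.mem_erase.2 ⟨fun h => hij h.symm |>.elim, hj⟩
        simp [iot, this]
    simp [h1, h2]
  · -- j ∉ s
    have h1 : Dmap x M (iot x j f) s =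
        ∑ i ∈ s, (((sgn i s : T) * sgn j (insert j (s.erase i))) * x i) •
          f (insert j (s.erase i)) := by
      rw [Dmap_apply]
      refine Finset.sum_congr rfl fun i hi => ?_
      have hji : j ∉ s.erase i := fun h => hj (Finset.mem_of_mem_erase h)
      simp only [iot, if_neg hji, smul_smul]
      congr 1
      ring
    have h2 : iot x j (Dmap x M f) s =
        x j • f s + ∑ i ∈ s, (((sgn j (insert j s) : T) * sgn i (insert j s)) * x i) •
          f (insert j (s.erase i)) := by
      simp only [iot, if_neg hj, Dmap_apply]
      rw [Finset.sum_insert hj, smul_add, Finset.smul_sum]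
      congr 1
      · rw [Finset.erase_insert hj, smul_smul]
        have := sgn_mul_self (T := T) j (insert j s)
        have hcoe : (sgn j (insert j s) : T) * ((sgn j (insert j s) : T) * x j) = x j := by
          rw [← mul_assoc, this, one_mul]
        rw [hcoe]
      · refine Finset.sum_congr rfl fun i hi => ?_
        have hij : i ≠ j := fun h => hj (h ▸ hi)
        rw [show (insert j s).erase i = insert j (s.erase i) from
          Finset.erase_insert_of_ne hij.symm, smul_smul]
        congr 1
        ring
    rw [Pi.add_apply, h1, h2, Pi.smul_apply]
    have hAB : (∑ i ∈ s, (((sgn i s : T) * sgn j (insert j (s.erase i))) * x i) •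
          f (insert j (s.erase i))) + (∑ i ∈ s, (((sgn j (insert j s) : T) * sgn i (insert j s))
            * x i) • f (insert j (s.erase i))) = 0 := by
      rw [← Finset.sum_add_distrib]
      have : ∀ i ∈ s, ((((sgn i s : T) * sgn j (insert j (s.erase i))) * x i) •
            f (insert j (s.erase i)) + (((sgn j (insert j s) : T) * sgn i (insert j s)) * x i) •
            f (insert j (s.erase i))) = 0 := by
        intro i hi
        have hsw := sgn_swap' (T := T) hi hj
        rw [← add_smul]
        have hc : (((sgn i s : T) * sgn j (insert j (s.erase i))) * x i)
            + (((sgn j (insert j s) : T) * sgn i (insert j s)) * x i) = 0 := by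
          rw [show ((sgn i s : T) * sgn j (insert j (s.erase i))) * x i
            = ((sgn i s : T) * sgn j (insert j (s.erase i))) * x i from rfl]
          calc ((sgn i s : T) * sgn j (insert j (s.erase i))) * x i
              + (((sgn j (insert j s) : T) * sgn i (insert j s)) * x i)
              = ((sgn i s : T) * sgn j (insert j (s.erase i))
                + (sgn j (insert j s) : T) * sgn i (insert j s)) * x i := by ring
            _ = 0 := by rw [hsw]; ring
        rw [hc, zero_smul]
      rw [Finset.sum_congr rfl this, Finset.sum_const_zero]
    calc (∑ i ∈ s, (((sgn i s : T) * sgn j (insert j (s.erase i))) * x i) •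
          f (insert j (s.erase i)))
        + (x j • f s + ∑ i ∈ s, (((sgn j (insert j s) : T) * sgn i (insert j s)) * x i) •
            f (insert j (s.erase i)))
        = ((∑ i ∈ s, (((sgn i s : T) * sgn j (insert j (s.erase i))) * x i) •
          f (insert j (s.erase i))) + (∑ i ∈ s, (((sgn j (insert j s) : T) * sgn i (insert j s))
            * x i) • f (insert j (s.erase i)))) + x j • f s := by abel
      _ = x j • f s := by rw [hAB, zero_add]


/-- `f` is concentrated in degree `n`. -/
def Deg (f : Finset (Fin d) → M) (n : ℕ) : Prop := ∀ s, f s ≠ 0 → s.card = n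

lemma Deg.zero (n : ℕ) : Deg (0 : Finset (Fin d) → M) n := fun s hs => absurd rfl hs

lemma Deg.add {f g : Finset (Fin d) → M} {n : ℕ} (hf : Deg f n) (hg : Deg g n) :
    Deg (f + g) n := by
  intro s hs
  by_cases h : f s = 0
  · exact hg s (fun h' => hs (by simp [Pi.add_apply, h, h']))
  · exact hf s h

lemma Deg.smul {f : Finset (Fin d) → M} {n : ℕ} (c : T) (hf : Deg f n) : Deg (c • f) n :=
  fun s hs => hf s (fun h => hs (by simp [Pi.smul_apply, h]))

lemma Deg.neg {f : Finset (Fin d) → M} {n : ℕ} (hf : Deg f n) : Deg (-f) n :=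
  fun s hs => hf s (fun h => hs (by simp [Pi.neg_apply, h]))

lemma Deg.sub {f g : Finset (Fin d) → M} {n : ℕ} (hf : Deg f n) (hg : Deg g n) :
    Deg (f - g) n := by
  rw [sub_eq_add_neg]
  exact hf.add hg.neg

lemma Deg.sum {ι : Type*} {t : Finset ι} {F : ι → Finset (Fin d) → M} {n : ℕ}
    (h : ∀ i ∈ t, Deg (F i) n) : Deg (∑ i ∈ t, F i) n := by
  classical
  induction t using Finset.induction_on with
  | empty => simpa using Deg.zero n
  | insert _ _ hnotmem ih =>
    rw [Finset.sum_insert hnotmem]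
    exact (h _ (Finset.mem_insert_self _ _)).add
      (ih fun i hi => h i (Finset.mem_insert_of_mem hi))

lemma Deg.dmap {f : Finset (Fin d) → M} {n : ℕ} (hf : Deg f n) :
    Deg (Dmap x M f) (n + 1) := by
  intro s hs
  rw [Dmap_apply] at hs
  obtain ⟨i, hi, hne⟩ : ∃ i ∈ s, ((sgn i s : T) * x i) • f (s.erase i) ≠ 0 := by
    by_contra h
    push_neg at h
    exact hs (Finset.sum_eq_zero h)
  have hfs : f (s.erase i) ≠ 0 := fun h => hne (by simp [h])
  have := hf _ hfs
  rw [Finset.card_erase_of_mem hi] at this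
  have h1 : 0 < s.card := Finset.card_pos.2 ⟨i, hi⟩
  omega

lemma Deg.dmap' {f : Finset (Fin d) → M} {n : ℕ} (hf : Deg f n) :
    Deg (Dmap x M f) (n + 1) := Deg.dmap x hf

lemma Deg.iot {f : Finset (Fin d) → M} {n : ℕ} (j : Fin d) (hf : Deg f n) :
    Deg (iot x j f) (n - 1) := by
  intro s hs
  simp only [SP11.iot] at hs
  by_cases hj : j ∈ s
  · simp [hj] at hs
  · rw [if_neg hj] at hs
    have : f (insert j s) ≠ 0 := fun h => hs (by simp [h])
    have hcard := hf _ this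
    rw [Finset.card_insert_of_notMem hj] at hcard
    omega

/-- Truncation to degree `m`. -/
def trunc (m : ℕ) (f : Finset (Fin d) → M) : Finset (Fin d) → M :=
  fun s => if s.card = m then f s else 0

lemma Deg.trunc (m : ℕ) (f : Finset (Fin d) → M) : Deg (trunc m f) m := by
  intro s hs
  simp only [SP11.trunc] at hs
  by_cases h : s.card = m
  · exact h
  · simp [h] at hs

lemma Dmap_trunc (m : ℕ) (f : Finset (Fin d) → M) :
    Dmap x M (trunc m f) = trunc (m + 1) (Dmap x M f) := by
  funext s
  rw [Dmap_apply]
  simp only [trunc, Dmap_apply]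
  by_cases h : s.card = m + 1
  · rw [if_pos h]
    refine Finset.sum_congr rfl fun i hi => ?_
    have : (s.erase i).card = m := by rw [Finset.card_erase_of_mem hi, h]; omega
    rw [if_pos this]
  · rw [if_neg h]
    refine Finset.sum_eq_zero fun i hi => ?_
    have : (s.erase i).card ≠ m := by
      rw [Finset.card_erase_of_mem hi]
      have : 1 ≤ s.card := Finset.card_pos.2 ⟨i, hi⟩
      omega
    rw [if_neg this, smul_zero]

/-- If `f` has pure degree `m+1` and is a boundary, it is the boundary of
a pure degree-`m` element. -/
lemma boundary_trunc {f g : Finset (Fin d) → M} {m : ℕ} (hf : Deg f (m + 1))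
    (hg : Dmap x M g = f) : Dmap x M (trunc m g) = f ∧ Deg (trunc m g) m := by
  refine ⟨?_, Deg.trunc m g⟩
  rw [Dmap_trunc, hg]
  funext s
  simp only [trunc]
  by_cases h : s.card = m + 1
  · rw [if_pos h]
  · rw [if_neg h]
    by_contra h'
    exact h (hf s (fun h'' => h' h''.symm))

lemma Dmap_comp {M₂ : Type*} [AddCommGroup M₂] [Module T M₂] (L : M →ₗ[T] M₂)
    (f : Finset (Fin d) → M) : Dmap x M₂ (fun s => L (f s)) = fun s => L (Dmap x M f s) := by
  funext s
  rw [Dmap_apply, Dmap_apply, map_sum]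
  exact Finset.sum_congr rfl fun i _ => (map_smul L _ _).symm

/-- The cochain concentrated on a single set. -/
def sing (t : Finset (Fin d)) (m : M) : Finset (Fin d) → M :=
  fun s => if s = t then m else 0

lemma Deg.sing (t : Finset (Fin d)) (m : M) : Deg (sing t m) t.card := by
  intro s hs
  simp only [SP11.sing] at hs
  by_cases h : s = t
  · rw [h]
  · simp [h] at hs

lemma smul_sing (c : T) (t : Finset (Fin d)) (m : M) :
    c • sing t m = sing t (c • m) := by
  funext s
  simp only [sing, Pi.smul_apply]
  by_cases h : s = t
  · rw [if_pos h, if_pos h]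
  · rw [if_neg h, if_neg h, smul_zero]

lemma sing_zero (t : Finset (Fin d)) : (sing t (0 : M)) = 0 := by
  funext s
  simp [sing]

lemma Dmap_sing (i : Fin d) (m : M) :
    Dmap x M (sing (Finset.univ.erase i) m) =
      sing Finset.univ (((sgn i Finset.univ : T) * x i) • m) := by
  have hd : 0 < d := i.pos
  funext s
  rw [Dmap_apply]
  by_cases hs : s = Finset.univ
  · subst hs
    rw [Finset.sum_eq_single_of_mem i (Finset.mem_univ i)]
    · simp [sing]
    · intro k _ hki
      have : Finset.univ.erase k ≠ Finset.univ.erase i := by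
        intro h
        have hik : i ∈ Finset.univ.erase k := Finset.mem_erase.2 ⟨fun h' => hki h'.symm |>.elim,
          Finset.mem_univ i⟩
        rw [h] at hik
        exact (Finset.mem_erase.1 hik).1 rfl
      simp [sing, this]
  · have : ∀ k ∈ s, ((sgn k s : T) * x k) • sing (Finset.univ.erase i) m (s.erase k) = 0 := by
      intro k hk
      have : s.erase k ≠ Finset.univ.erase i := by
        intro h
        have hcard : s.card = d := by
          have h1 : (s.erase k).card = s.card - 1 := Finset.card_erase_of_mem hk
          have h2 : (Finset.univ.erase i : Finset (Fin d)).card = d - 1 := by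
            rw [Finset.card_erase_of_mem (Finset.mem_univ i), Finset.card_univ, Fintype.card_fin]
          have h3 : 1 ≤ s.card := Finset.card_pos.2 ⟨k, hk⟩
          have := h ▸ h1
          omega
        exact hs (s.card_eq_iff_eq_univ.1 (by rw [hcard, Fintype.card_fin]))
      simp [sing, this]
    rw [Finset.sum_eq_zero this]
    simp [sing, hs]


/-- Vanishing of Koszul cohomology in degree `n` (elementwise form):
every pure degree-`n` cocycle is a coboundary. -/
def Van (M : Type*) [AddCommGroup M] [Module T M] (n : ℕ) : Prop :=
  ∀ f : Finset (Fin d) → M, Deg f n → Dmap x M f = 0 → ∃ g, Dmap x M g = f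

lemma mem_smul_top_iff (r : T) (m : M) :
    m ∈ r • (⊤ : Submodule T M) ↔ ∃ y, r • y = m := by
  rw [← SetLike.mem_coe, Submodule.coe_pointwise_smul, Set.mem_smul_set]
  simp

lemma iot_zero (j : Fin d) : iot x j (0 : Finset (Fin d) → M) = 0 := by
  funext s
  simp [iot]

/-- Multiplication by an element of `Q = (x)` on a cocycle is a coboundary
(with controlled degree). -/
lemma boundary_of_smul_cocycle {f : Finset (Fin d) → M} {n : ℕ}
    (hcyc : Dmap x M f = 0) (hdeg : Deg f n) {q : T}
    (hq : q ∈ Ideal.span (Set.range x)) :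
    ∃ h, Deg h (n - 1) ∧ Dmap x M h = q • f := by
  induction hq using Submodule.span_induction with
  | mem a ha =>
    obtain ⟨j, rfl⟩ := ha
    refine ⟨iot x j f, Deg.iot x j hdeg, ?_⟩
    have := homotopy x j f
    rw [hcyc, iot_zero, add_zero] at this
    exact this
  | zero => exact ⟨0, Deg.zero _, by simp⟩
  | add a b _ _ iha ihb =>
    obtain ⟨h1, hd1, he1⟩ := iha
    obtain ⟨h2, hd2, he2⟩ := ihb
    exact ⟨h1 + h2, hd1.add hd2, by rw [map_add, he1, he2, add_smul]⟩
  | smul c a _ ih =>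
    obtain ⟨h, hd, he⟩ := ih
    refine ⟨c • h, hd.smul c, by rw [map_smul, he, smul_eq_mul, mul_smul]⟩

open RingTheory.Sequence in
/-- Depth sensitivity of Koszul cohomology, elementwise form: if `M` admits a
weakly regular sequence of length `k` consisting of elements whose powers lie in
`Q = (x)`, then the Koszul cohomology of `x` with coefficients in `M` vanishes in
degrees `< k`. -/
theorem van_of_isWeaklyRegular {M : Type*} [AddCommGroup M] [Module T M] {rs : List T}
    (h : IsWeaklyRegular M rs) :
    (∀ r ∈ rs, ∃ m : ℕ, r ^ m ∈ Ideal.span (Set.range x)) →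
      ∀ n, n < rs.length → Van x M n := by
  induction h with
  | nil N => intro _ n hn; simp at hn
  | @cons M _ _ r rs h1 h2 ih =>
    intro hrad n hn f hdeg hcyc
    obtain ⟨m₀, hm₀⟩ := hrad r List.mem_cons_self
    obtain ⟨h₀, hdeg₀, hDh₀⟩ := boundary_of_smul_cocycle x hcyc hdeg hm₀
    have hradtail : ∀ r' ∈ rs, ∃ m : ℕ, r' ^ m ∈ Ideal.span (Set.range x) :=
      fun r' hr' => hrad r' (List.mem_cons_of_mem r hr')
    rcases n with _ | m
    · -- degree 0 : the cocycle is zero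
      have hf0 : f = 0 := by
        funext s
        by_cases hs : f s = 0
        · exact hs
        · exfalso
          have hcard := hdeg s hs
          have hsempty : s = ∅ := Finset.card_eq_zero.1 hcard
          have : Dmap x M h₀ ∅ = (r ^ m₀ • f) ∅ := by rw [hDh₀]
          rw [Dmap_apply] at this
          simp only [Finset.sum_empty] at this
          have hzero : r ^ m₀ • f ∅ = 0 := by
            rw [Pi.smul_apply] at this
            exact this.symm
          have := (h1.pow m₀) (by rw [hzero, smul_zero] : r ^ m₀ • f ∅ = r ^ m₀ • 0)
          rw [hsempty] at hs
          exact hs this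
      exact ⟨0, by rw [hf0, map_zero]⟩
    · -- degree m + 1
      suffices aux : ∀ (j : ℕ) (hh : Finset (Fin d) → M), Deg hh m →
          Dmap x M hh = (r ^ j) • f → ∃ g, Dmap x M g = f by
        exact aux m₀ h₀ (by simpa using hdeg₀) hDh₀
      intro j
      induction j with
      | zero =>
        intro hh _ hDh
        exact ⟨hh, by rw [hDh, pow_zero, one_smul]⟩
      | succ j ihj =>
        intro hh hdegh hDh
        set p : Submodule T M := r • (⊤ : Submodule T M) with hp
        have hbar : Dmap x (QuotSMulTop r M) (fun s => p.mkQ (hh s)) = 0 := by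
          rw [Dmap_comp x p.mkQ hh]
          funext s
          simp only [hDh, Pi.smul_apply, Pi.zero_apply, Submodule.mkQ_apply,
            Submodule.Quotient.mk_eq_zero]
          exact (mem_smul_top_iff r _).2
            ⟨r ^ j • f s, by rw [← mul_smul, ← pow_succ']⟩
        have hdegbar : Deg (fun s => p.mkQ (hh s)) m := by
          intro s hs
          refine hdegh s (fun h0 => hs ?_)
          show p.mkQ (hh s) = 0
          rw [h0, map_zero]
        have hmlt : m < rs.length := by
          have := hn
          simp only [List.length_cons] at this
          omega
        obtain ⟨kbar, hkbar⟩ := ih hradtail m hmlt _ hdegbar hbar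
        choose k hk using fun s => Submodule.Quotient.mk_surjective p (kbar s)
        have hkfun : (fun s => p.mkQ (k s)) = kbar := by
          funext s
          rw [Submodule.mkQ_apply, hk]
        have hdiff : ∀ s, hh s - Dmap x M k s ∈ p := by
          intro s
          rw [← Submodule.Quotient.mk_eq_zero, ← Submodule.mkQ_apply, map_sub]
          have h3 : p.mkQ (Dmap x M k s) = Dmap x (QuotSMulTop r M)
              (fun s => p.mkQ (k s)) s := by
            rw [Dmap_comp x p.mkQ k]
          rw [h3, hkfun, hkbar]
          simp
        choose w hw using fun s => (mem_smul_top_iff r _).1 (hdiff s)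
        have hwD : Dmap x M (r • w) = Dmap x M hh := by
          have : (r • w : Finset (Fin d) → M) = hh - Dmap x M k := by
            funext s
            rw [Pi.smul_apply, hw s, Pi.sub_apply]
          rw [this, map_sub, Dmap_Dmap, sub_zero]
        have hDwval : Dmap x M w = r ^ j • f := by
          have hr : ∀ s, r • (Dmap x M w s) = r • ((r ^ j • f) s) := by
            intro s
            have h4 : r • Dmap x M w s = Dmap x M (r • w) s := by
              rw [map_smul, Pi.smul_apply]
            rw [h4, hwD, hDh]
            simp only [Pi.smul_apply]
            rw [← mul_smul, ← pow_succ']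
          funext s
          exact h1 (hr s)
        obtain ⟨hD', hdeg'⟩ := boundary_trunc x (hdeg.smul (r ^ j)) hDwval
        exact ihj (trunc m w) hdeg' hD'


lemma sing_sum {ι : Type*} (t : Finset ι) (u : Finset (Fin d)) (F : ι → M) :
    ∑ i ∈ t, sing u (F i) = sing u (∑ i ∈ t, F i) := by
  funext s
  rw [Finset.sum_apply]
  simp only [sing]
  by_cases h : s = u
  · simp [h]
  · simp [h]

/-- The chase through the two short exact sequences: a degree-`d-1` cocycle with
values in `(z)` is `z` times a coboundary, provided the Koszul cohomology of `T`
vanishes below degree `d` and that of `T/(z)` vanishes below degree `d-1`. -/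
lemma chase (z : T) (hd : 0 < d)
    (VanT : ∀ n, n < d → Van x T n)
    (VanM : ∀ n, n < d - 1 → Van x (T ⧸ Ideal.span {z}) n)
    (f : Finset (Fin d) → T) (hdeg : Deg f (d - 1)) (hcyc : Dmap x T f = 0)
    (hdiv : ∀ s, f s ∈ Ideal.span {z}) :
    ∃ h, f = z • Dmap x T h := by
  obtain ⟨g₀', hg₀'⟩ := VanT (d - 1) (by omega) f hdeg hcyc
  rcases eq_or_lt_of_le (Nat.succ_le_of_lt hd) with h1 | h1
  · -- d = 1 : the cocycle is zero
    have hf0 : f = 0 := by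
      funext s
      by_cases hfs : f s = 0
      · exact hfs
      · exfalso
        have hcard := hdeg s hfs
        have hd1 : d = 1 := h1.symm
        have hsempty : s = ∅ := Finset.card_eq_zero.1 (by omega)
        have : f ∅ = Dmap x T g₀' ∅ := by rw [hg₀']
        rw [Dmap_apply] at this
        simp only [Finset.sum_empty] at this
        rw [hsempty] at hfs
        exact hfs this
    exact ⟨0, by rw [hf0, map_zero, smul_zero]⟩
  · -- 1 < d
    have hrw : d - 1 = (d - 2) + 1 := by omega
    obtain ⟨hDg₀, hdegg₀⟩ := boundary_trunc x (m := d - 2) (hrw ▸ hdeg) hg₀'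
    set g₀ := trunc (d - 2) g₀' with hg₀def
    set P := Ideal.span {z} with hP
    have hbar : Dmap x (T ⧸ P) (fun s => P.mkQ (g₀ s)) = 0 := by
      rw [Dmap_comp x P.mkQ g₀]
      funext s
      simp only [hDg₀, Pi.zero_apply, Submodule.mkQ_apply, Submodule.Quotient.mk_eq_zero]
      exact hdiv s
    have hdegbar : Deg (fun s => P.mkQ (g₀ s)) (d - 2) := by
      intro s hs
      refine hdegg₀ s (fun h0 => hs ?_)
      show P.mkQ (g₀ s) = 0
      rw [h0, map_zero]
    obtain ⟨kbar, hkbar⟩ := VanM (d - 2) (by omega) _ hdegbar hbar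
    choose k hk using fun s => Submodule.Quotient.mk_surjective P (kbar s)
    have hkfun : (fun s => P.mkQ (k s)) = kbar := by
      funext s
      rw [Submodule.mkQ_apply, hk]
    have hdiff : ∀ s, g₀ s - Dmap x T k s ∈ P := by
      intro s
      rw [← Submodule.Quotient.mk_eq_zero, ← Submodule.mkQ_apply, map_sub]
      have h3 : P.mkQ (Dmap x T k s) = Dmap x (T ⧸ P) (fun s => P.mkQ (k s)) s := by
        rw [Dmap_comp x P.mkQ k]
      rw [h3, hkfun, hkbar]
      simp
    choose c hc using fun s => Ideal.mem_span_singleton'.1 (hdiff s)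
    refine ⟨c, ?_⟩
    have hzc : (z • c : Finset (Fin d) → T) = g₀ - Dmap x T k := by
      funext s
      rw [Pi.smul_apply, Pi.sub_apply, ← hc s, smul_eq_mul, mul_comm]
    calc f = Dmap x T g₀ := hDg₀.symm
      _ = Dmap x T (g₀ - Dmap x T k) := by rw [map_sub, Dmap_Dmap, sub_zero]
      _ = Dmap x T (z • c) := by rw [hzc]
      _ = z • Dmap x T c := by rw [map_smul]

/-- The key lemma: if the Koszul cohomology of `T` vanishes below degree `d`,
that of `T/(z)` vanishes below degree `d-1`, then the annihilator `N` of `z`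
satisfies `N ∩ Q ⊆ Q·N`. -/
lemma key (z : T)
    (VanT : ∀ n, n < d → Van x T n)
    (VanM : ∀ n, n < d - 1 → Van x (T ⧸ Ideal.span {z}) n)
    (a : T) (haz : a * z = 0) (haQ : a ∈ Ideal.span (Set.range x)) :
    a ∈ Ideal.span (Set.range x) • ((⊥ : Ideal T).colon (Ideal.span {z})) := by
  rcases Nat.eq_zero_or_pos d with hd | hd
  · subst hd
    rw [Set.range_eq_empty x, Ideal.span_empty, Submodule.mem_bot] at haQ
    rw [haQ]
    exact zero_mem _
  -- representation of a as a top coboundary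
  obtain ⟨cf, hcf⟩ := (Submodule.mem_span_range_iff_exists_fun T).1 haQ
  set g : Finset (Fin d) → T :=
    ∑ i : Fin d, sing (Finset.univ.erase i) ((sgn i Finset.univ : T) * cf i) with hgdef
  have hDg : Dmap x T g = sing Finset.univ a := by
    rw [hgdef, map_sum]
    have : ∀ i : Fin d, Dmap x T (sing (Finset.univ.erase i) ((sgn i Finset.univ : T) * cf i))
        = sing Finset.univ (cf i • x i) := by
      intro i
      rw [Dmap_sing]
      refine congrArg _ ?_
      have hsq := sgn_mul_self (T := T) i Finset.univ
      calc ((sgn i Finset.univ : T) * x i) • ((sgn i Finset.univ : T) * cf i)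
          = ((sgn i Finset.univ : T) * (sgn i Finset.univ : T)) * (x i * cf i) := by
            rw [smul_eq_mul]; ring
        _ = cf i • x i := by rw [hsq, smul_eq_mul]; ring
    rw [Finset.sum_congr rfl (fun i _ => this i), sing_sum, hcf]
  have hdegg : Deg g (d - 1) := by
    rw [hgdef]
    refine Deg.sum fun i _ => ?_
    have : (Finset.univ.erase i).card = d - 1 := by
      rw [Finset.card_erase_of_mem (Finset.mem_univ i), Finset.card_univ, Fintype.card_fin]
    exact this ▸ Deg.sing _ _
  -- z • g is a cocycle with values in (z)
  have hdegzg : Deg (z • g) (d - 1) := hdegg.smul z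
  have hcyczg : Dmap x T (z • g) = 0 := by
    rw [map_smul, hDg]
    funext s
    show z * (sing Finset.univ a s) = 0
    simp only [sing]
    by_cases h : s = Finset.univ
    · rw [if_pos h, mul_comm, haz]
    · rw [if_neg h, mul_zero]
  have hdivzg : ∀ s, (z • g) s ∈ Ideal.span {z} := by
    intro s
    rw [Pi.smul_apply, smul_eq_mul]
    exact Ideal.mem_span_singleton'.2 ⟨g s, mul_comm _ _⟩
  obtain ⟨h, hzh⟩ := chase x z hd VanT VanM (z • g) hdegzg hcyczg hdivzg
  -- entries of g - Dmap h annihilate z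
  set nf := g - Dmap x T h with hnf
  have hnfann : ∀ s, nf s ∈ (⊥ : Ideal T).colon (Ideal.span {z}) := by
    intro s
    rw [Ideal.mem_colon_span_singleton, Ideal.mem_bot]
    have h5 : z * g s = z * Dmap x T h s := congrFun hzh s
    show (g s - Dmap x T h s) * z = 0
    linear_combination h5
  have ha2 : a = Dmap x T nf Finset.univ := by
    have : Dmap x T nf = Dmap x T g := by rw [hnf, map_sub, Dmap_Dmap, sub_zero]
    rw [this, hDg]
    simp [sing]
  rw [ha2, Dmap_apply]
  refine Submodule.sum_mem _ fun i _ => ?_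
  rw [show ((sgn i Finset.univ : T) * x i) • nf (Finset.univ.erase i)
    = (sgn i Finset.univ : T) • (x i • nf (Finset.univ.erase i)) from by
      rw [smul_smul]]
  exact Submodule.smul_mem _ _
    (Submodule.smul_mem_smul (Ideal.subset_span (Set.mem_range_self i)) (hnfann _))

end Differential

/-- In a local ring, an ideal with finite-length quotient contains a power of
the maximal ideal. -/
lemma pow_maximalIdeal_le_of_finiteLength {T : Type*} [CommRing T] [IsLocalRing T]
    (Q : Ideal T) (hfl : IsFiniteLength T (T ⧸ Q)) :
    ∃ k, (IsLocalRing.maximalIdeal T) ^ k ≤ Q := by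
  have hart : IsArtinian T (T ⧸ Q) := (isFiniteLength_iff_isNoetherian_isArtinian.mp hfl).2
  have : IsArtinianRing (T ⧸ Q) := isArtinian_of_tower T hart
  obtain ⟨k, hk⟩ := IsArtinianRing.isNilpotent_jacobson_bot (R := T ⧸ Q)
  have hmap : (IsLocalRing.maximalIdeal T).map (Ideal.Quotient.mk Q) ≤
      Ideal.jacobson (⊥ : Ideal (T ⧸ Q)) := by
    rw [Ideal.jacobson]
    refine le_sInf ?_
    rintro J ⟨-, hJmax⟩
    haveI := hJmax
    have hcom : (J.comap (Ideal.Quotient.mk Q)).IsMaximal :=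
      Ideal.comap_isMaximal_of_surjective _ Ideal.Quotient.mk_surjective
    have heq := IsLocalRing.eq_maximalIdeal hcom
    calc (IsLocalRing.maximalIdeal T).map (Ideal.Quotient.mk Q)
        = (J.comap (Ideal.Quotient.mk Q)).map (Ideal.Quotient.mk Q) := by rw [heq]
      _ ≤ J := Ideal.map_comap_le
  refine ⟨k, fun a ha => ?_⟩
  have h1 : Ideal.Quotient.mk Q a ∈
      ((IsLocalRing.maximalIdeal T).map (Ideal.Quotient.mk Q)) ^ k := by
    rw [← Ideal.map_pow]
    exact Ideal.mem_map_of_mem _ ha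
  have h2 := Ideal.pow_right_mono hmap k h1
  rw [hk] at h2
  have h3 : Ideal.Quotient.mk Q a = 0 := by
    simpa using h2
  exact (Ideal.Quotient.eq_zero_iff_mem).1 h3

end SP11

/-- `T` is a Gorenstein local ring: it is Noetherian local, admits a system of parameters
(a family of `dim T` elements with finite-length quotient) which is a regular sequence
(so `T` is Cohen–Macaulay), and the quotient by the ideal generated by this system of
parameters has one-dimensional socle; the socle condition for `T/Q` is expressed as
`(Q : η) = Q + (u)` for a single element `u ∉ Q`, where `η` is the maximal ideal. -/
def IsGorensteinLocalRingP (T : Type*) [CommRing T] : Prop :=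
  IsNoetherianRing T ∧ IsLocalRing T ∧
    ∃ (d : ℕ) (x : Fin d → T), ringKrullDim T = (d : ℕ) ∧
      IsFiniteLength T (T ⧸ Ideal.span (Set.range x)) ∧
      RingTheory.Sequence.IsRegular T (List.ofFn x) ∧
      ∃ u : T, u ∉ Ideal.span (Set.range x) ∧
        ∀ η : Ideal T, η.IsMaximal →
          Submodule.colon (Ideal.span (Set.range x)) η =
            Ideal.span (Set.range x) ⊔ Ideal.span {u}

/-- Let `(T, η)` be a Gorenstein local ring of dimension `d`, let
`x₁, …, x_d` be a system of parameters with `Q = (x₁, …, x_d)`, `u ∈ T` a lifting of a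
socle element of `T/Q`, and `z ∈ T` a zero divisor.  If `depth(η, T/(z)) ≥ d − 1`
(i.e. there is a `T/(z)`-regular sequence of length `d − 1` inside `η`), then
`u·z ∈ Q·(z)`. -/
theorem socle_parameter_of_depth_ge
    (T : Type*) [CommRing T] [IsLocalRing T] (hGor : IsGorensteinLocalRingP T)
    (d : ℕ) (hdim : ringKrullDim T = (d : ℕ))
    (x : Fin d → T) (hx : ∀ i, x i ∈ IsLocalRing.maximalIdeal T)
    (hsop : IsFiniteLength T (T ⧸ Ideal.span (Set.range x)))
    (u : T)
    (hu : Submodule.colon (Ideal.span (Set.range x)) (IsLocalRing.maximalIdeal T) =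
        Ideal.span (Set.range x) ⊔ Ideal.span {u})
    (z : T) (hz : z ∉ nonZeroDivisors T)
    (hdepth : ∃ y : Fin (d - 1) → T, (∀ i, y i ∈ IsLocalRing.maximalIdeal T) ∧
      RingTheory.Sequence.IsRegular (T ⧸ Ideal.span {z}) (List.ofFn y)) :
    u * z ∈ Ideal.span (Set.range x) * Ideal.span {z} := by
  classical
  obtain ⟨hNoeth, -, d', x'pre, hdim', hfl', hreg', -⟩ := hGor
  obtain ⟨y, hy, hyreg⟩ := hdepth
  -- identify d' with d
  have hdd : d = d' := by
    rw [hdim] at hdim'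
    exact_mod_cast hdim'
  subst hdd
  set η := IsLocalRing.maximalIdeal T with hη
  set Q := Ideal.span (Set.range x) with hQdef
  set N := (⊥ : Ideal T).colon (Ideal.span {z}) with hNdef
  -- a power of the maximal ideal is inside Q
  obtain ⟨K, hK⟩ := SP11.pow_maximalIdeal_le_of_finiteLength Q hsop
  -- the regular sequence x' consists of elements of η
  have hofne : Ideal.ofList (List.ofFn x'pre) ≠ ⊤ := by
    intro h
    exact hreg'.top_ne_smul (by rw [h, Submodule.top_smul])
  have hx'mem : ∀ i, x'pre i ∈ η := by
    intro i
    refine IsLocalRing.le_maximalIdeal hofne (Ideal.subset_span ?_)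
    exact List.mem_ofFn.2 ⟨i, rfl⟩
  -- Vanishing of Koszul cohomology of T in degrees < d
  have VanT : ∀ n, n < d → SP11.Van x T n := by
    intro n hn
    refine SP11.van_of_isWeaklyRegular x hreg'.toIsWeaklyRegular ?_ n ?_
    · intro r hr
      obtain ⟨i, rfl⟩ := Set.mem_range.1 (List.mem_ofFn.1 hr)
      exact ⟨K, hK (Ideal.pow_mem_pow (hx'mem i) K)⟩
    · rwa [List.length_ofFn]
  -- Vanishing of Koszul cohomology of T/(z) in degrees < d - 1
  have VanM : ∀ n, n < d - 1 → SP11.Van x (T ⧸ Ideal.span {z}) n := by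
    intro n hn
    refine SP11.van_of_isWeaklyRegular x hyreg.toIsWeaklyRegular ?_ n ?_
    · intro r hr
      obtain ⟨i, rfl⟩ := Set.mem_range.1 (List.mem_ofFn.1 hr)
      exact ⟨K, hK (Ideal.pow_mem_pow (hy i) K)⟩
    · rwa [List.length_ofFn]
  -- annihilator of z is nonzero
  obtain ⟨a₀, ha₀z, ha₀⟩ : ∃ a, a * z = 0 ∧ a ≠ 0 := by
    by_contra h
    push_neg at h
    exact hz (mem_nonZeroDivisors_iff_right.2 fun a ha => h a ha)
  -- Q ≤ η
  have hQle : Q ≤ η := Ideal.span_le.2 (Set.range_subset_iff.2 hx)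
  -- N is not contained in Q
  have hNQ : ¬ N ≤ Q := by
    intro hle
    haveI : IsNoetherian T T := hNoeth
    have hbot : N = ⊥ := by
      refine Submodule.eq_bot_of_le_smul_of_le_jacobson_bot Q N
        (IsNoetherian.noetherian N) ?_ ?_
      · intro a ha
        have haz : a * z = 0 := by
          have := Ideal.mem_colon_span_singleton.1 ha
          simpa using this
        exact SP11.key x z VanT VanM a haz (hle ha)
      · rw [IsLocalRing.jacobson_eq_maximalIdeal (⊥ : Ideal T) bot_ne_top]
        exact hQle
    have : a₀ ∈ N := Ideal.mem_colon_span_singleton.2 (by simp [ha₀z])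
    rw [hbot] at this
    exact ha₀ (by simpa using this)
  obtain ⟨a, haN, haQ'⟩ := SetLike.not_le_iff_exists.1 hNQ
  -- minimal k with η^k · (a) ⊆ Q
  set P : ℕ → Prop := fun k => η ^ k * Ideal.span {a} ≤ Q with hPdef
  have hPK : P K := le_trans Ideal.mul_le_left hK
  have hP0 : ¬ P 0 := by
    intro h
    have h' : η ^ 0 * Ideal.span {a} ≤ Q := h
    rw [pow_zero, one_mul] at h'
    exact haQ' (h' (Ideal.subset_span rfl))
  let k₀ := Nat.find (⟨K, hPK⟩ : ∃ k, P k)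
  have hk₀ : P k₀ := Nat.find_spec (⟨K, hPK⟩ : ∃ k, P k)
  have hk₀pos : 0 < k₀ := by
    rcases Nat.eq_zero_or_pos k₀ with h | h
    · exact absurd (h ▸ hk₀) hP0
    · exact h
  have hnot : ¬ P (k₀ - 1) := Nat.find_min _ (by omega)
  obtain ⟨b, hbmem, hbQ⟩ := SetLike.not_le_iff_exists.1 hnot
  -- b is in the socle colon
  have hbcolon : b ∈ Submodule.colon Q η := by
    rw [Submodule.mem_colon]
    intro p hp
    have h7 : b * p ∈ (η ^ (k₀ - 1) * Ideal.span {a}) * η := Ideal.mul_mem_mul hbmem hp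
    have heq : (η ^ (k₀ - 1) * Ideal.span {a}) * η = η ^ k₀ * Ideal.span {a} := by
      rw [mul_right_comm, ← pow_succ, Nat.sub_add_cancel hk₀pos]
    rw [heq] at h7
    have hk₀' : η ^ k₀ * Ideal.span {a} ≤ Q := hk₀
    exact hk₀' h7
  rw [hu] at hbcolon
  obtain ⟨q, hq, w, hw, hbqw⟩ := Submodule.mem_sup.1 hbcolon
  obtain ⟨cc, hcc⟩ := Ideal.mem_span_singleton'.1 hw
  have hcunit : IsUnit cc := by
    by_contra hcu
    have hcm : cc ∈ η := (IsLocalRing.mem_maximalIdeal cc).2 hcu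
    have humem : u ∈ Submodule.colon Q η := by
      rw [hu]
      exact Submodule.mem_sup_right (Ideal.mem_span_singleton_self u)
    have huc : u * cc ∈ Q := by
      have := Submodule.mem_colon.1 humem cc hcm
      simpa using this
    apply hbQ
    rw [← hbqw]
    exact Submodule.add_mem _ hq (by rw [← hcc, mul_comm]; exact huc)
  obtain ⟨cu, hcu⟩ := hcunit
  have hbN : b ∈ N := by
    have h6 : Ideal.span {a} ≤ N := (Ideal.span_singleton_le_iff_mem N).2 haN
    exact h6 (Ideal.mul_le_right hbmem)
  have huNQ : u ∈ N ⊔ Q := by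
    have hcu' : (↑cu⁻¹ : T) * cc = 1 := by rw [← hcu]; exact Units.inv_mul cu
    have hueq : u = (↑cu⁻¹ : T) * b - (↑cu⁻¹ : T) * q := by
      have hwbq : cc * u = b - q := by
        rw [hcc]
        rw [← hbqw]
        ring
      calc u = ((↑cu⁻¹ : T) * cc) * u := by rw [hcu', one_mul]
        _ = (↑cu⁻¹ : T) * (cc * u) := by ring
        _ = (↑cu⁻¹ : T) * (b - q) := by rw [hwbq]
        _ = (↑cu⁻¹ : T) * b - (↑cu⁻¹ : T) * q := by ring
    rw [hueq]
    exact Submodule.sub_mem _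
      (Submodule.mem_sup_left (Ideal.mul_mem_left _ _ hbN))
      (Submodule.mem_sup_right (Ideal.mul_mem_left _ _ hq))
  obtain ⟨nn, hnn, qq, hqq, hnq⟩ := Submodule.mem_sup.1 huNQ
  have hnnz : nn * z = 0 := by
    have := Ideal.mem_colon_span_singleton.1 hnn
    simpa using this
  have huz : u * z = qq * z := by
    rw [← hnq, add_mul, hnnz, zero_add]
  rw [huz]
  exact Ideal.mul_mem_mul hqq (Ideal.mem_span_singleton_self z)
end
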